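/- Let p be a prime and f ∈ ℤ[x] not identically zero modulo p. Then the sum of s(f,ζ₀) over all degenerate roots ζ₀ ∈ {0,…,p−1} of the mod-p reduction f̃ (roots with f′(ζ₀) ≡ 0 (mod p)) is at most deg f̃. -/

import Mathlib

open Polynomial

/-- `s(f,ζ₀) = min_{i ≥ 0} (i + ord_p(f⁽ⁱ⁾(ζ₀)/i!))`, where `f⁽ⁱ⁾(ζ₀)/i!` is the
coefficient of `x^i` in `f(ζ₀+x)`; the minimum ranges over `i` with nonzero coefficient. -/
noncomputable def sVal (p : ℕ) (f : Polynomial ℤ) (ζ₀ : ℤ) : ℕ :=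
  sInf {n : ℕ | ∃ i : ℕ, (f.comp (X + C ζ₀)).coeff i ≠ 0 ∧
    n = i + padicValInt p ((f.comp (X + C ζ₀)).coeff i)}

/-- `sVal` is bounded by the root multiplicity of `ζ₀` mod `p`. -/
lemma sVal_le_rootMultiplicity (p : ℕ) (hp : p.Prime) (f : Polynomial ℤ)
    (hf : f.map (Int.castRingHom (ZMod p)) ≠ 0) (ζ₀ : ℤ) :
    sVal p f ζ₀ ≤ (f.map (Int.castRingHom (ZMod p))).rootMultiplicity (ζ₀ : ZMod p) := by
  set φ := Int.castRingHom (ZMod p)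
  set F := f.map φ with hF
  set m := (F.comp (X + C (ζ₀ : ZMod p))).natTrailingDegree with hm
  have hcomp : (f.comp (X + C ζ₀)).map φ = F.comp (X + C (ζ₀ : ZMod p)) := by
    rw [Polynomial.map_comp]
    simp [φ]
    rfl
  have hFc : F.comp (X + C (ζ₀ : ZMod p)) ≠ 0 := comp_X_add_C_ne_zero_iff.mpr hf
  have hcoeffZ : φ ((f.comp (X + C ζ₀)).coeff m) = (F.comp (X + C (ζ₀ : ZMod p))).coeff m := by
    rw [← hcomp, coeff_map]
  have hne : (F.comp (X + C (ζ₀ : ZMod p))).coeff m ≠ 0 := by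
    rw [hm, ← trailingCoeff]
    exact mt trailingCoeff_eq_zero.mp hFc
  have hndvd : ¬ (p : ℤ) ∣ (f.comp (X + C ζ₀)).coeff m := by
    intro hdvd
    apply hne
    rw [← hcoeffZ]
    simpa [φ, ZMod.intCast_zmod_eq_zero_iff_dvd] using hdvd
  have hne' : (f.comp (X + C ζ₀)).coeff m ≠ 0 := by
    intro h; exact hndvd (h ▸ dvd_zero _)
  have hval : padicValInt p ((f.comp (X + C ζ₀)).coeff m) = 0 :=
    padicValInt.eq_zero_of_not_dvd hndvd
  have hmem : m ∈ {n : ℕ | ∃ i : ℕ, (f.comp (X + C ζ₀)).coeff i ≠ 0 ∧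
      n = i + padicValInt p ((f.comp (X + C ζ₀)).coeff i)} :=
    ⟨m, hne', by rw [hval, add_zero]⟩
  calc sVal p f ζ₀ ≤ m := Nat.sInf_le hmem
    _ = F.rootMultiplicity (ζ₀ : ZMod p) := (rootMultiplicity_eq_natTrailingDegree).symm

/-- The sum of `s(f,ζ₀)` over the degenerate roots `ζ₀ ∈ {0,…,p-1}` of the mod-`p`
reduction of `f` is at most the degree of that reduction. -/
theorem sum_sVal_le_degree (p : ℕ) (hp : p.Prime)
    (f : Polynomial ℤ) (hf : f.map (Int.castRingHom (ZMod p)) ≠ 0) :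
    (∑ z ∈ (Finset.range p).filter
        (fun z : ℕ => (p : ℤ) ∣ f.eval (z : ℤ) ∧ (p : ℤ) ∣ f.derivative.eval (z : ℤ)),
      sVal p f (z : ℤ))
      ≤ (f.map (Int.castRingHom (ZMod p))).natDegree := by
  classical
  haveI : Fact p.Prime := ⟨hp⟩
  set φ := Int.castRingHom (ZMod p)
  set F := f.map φ with hF
  set S := (Finset.range p).filter
      (fun z : ℕ => (p : ℤ) ∣ f.eval (z : ℤ) ∧ (p : ℤ) ∣ f.derivative.eval (z : ℤ)) with hS
  have hroot : ∀ z ∈ S, F.IsRoot ((z : ℤ) : ZMod p) := by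
    intro z hz
    obtain ⟨h1, _⟩ := (Finset.mem_filter.mp hz).2
    have : F.eval (φ (z : ℤ)) = φ (f.eval (z : ℤ)) := by
      rw [hF, eval_map, eval₂_hom]
    simp only [IsRoot]
    rw [show ((z : ℤ) : ZMod p) = φ (z : ℤ) from rfl, this]
    simpa [φ, ZMod.intCast_zmod_eq_zero_iff_dvd] using h1
  have step1 : (∑ z ∈ S, sVal p f (z : ℤ))
      ≤ ∑ z ∈ S, F.rootMultiplicity ((z : ℤ) : ZMod p) :=
    Finset.sum_le_sum fun z _ => sVal_le_rootMultiplicity p hp f hf (z : ℤ)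
  have hinj : ∀ z₁ ∈ S, ∀ z₂ ∈ S,
      (((z₁ : ℤ) : ZMod p)) = (((z₂ : ℤ) : ZMod p)) → z₁ = z₂ := by
    intro z₁ hz₁ z₂ hz₂ h
    have h1 : z₁ < p := Finset.mem_range.mp (Finset.mem_filter.mp hz₁).1
    have h2 : z₂ < p := Finset.mem_range.mp (Finset.mem_filter.mp hz₂).1
    have : ((z₁ : ZMod p)) = ((z₂ : ZMod p)) := by push_cast at h ⊢; exact h
    calc z₁ = (z₁ : ZMod p).val := (ZMod.val_cast_of_lt h1).symm
      _ = (z₂ : ZMod p).val := by rw [this]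
      _ = z₂ := ZMod.val_cast_of_lt h2
  have step2 : (∑ z ∈ S, F.rootMultiplicity ((z : ℤ) : ZMod p))
      = ∑ s ∈ S.image (fun z : ℕ => ((z : ℤ) : ZMod p)), F.rootMultiplicity s :=
    (Finset.sum_image (f := fun s => F.rootMultiplicity s) hinj).symm
  have hsub : S.image (fun z : ℕ => ((z : ℤ) : ZMod p)) ⊆ F.roots.toFinset := by
    intro s hs
    obtain ⟨z, hz, rfl⟩ := Finset.mem_image.mp hs
    rw [Multiset.mem_toFinset, mem_roots hf]
    exact hroot z hz
  have step3 : (∑ s ∈ S.image (fun z : ℕ => ((z : ℤ) : ZMod p)), F.rootMultiplicity s)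
      ≤ ∑ s ∈ F.roots.toFinset, F.rootMultiplicity s := by
    refine Finset.sum_le_sum_of_subset_of_nonneg hsub ?_
    intros; exact Nat.zero_le _
  have step4 : (∑ s ∈ F.roots.toFinset, F.rootMultiplicity s) = Multiset.card F.roots := by
    simp_rw [← count_roots]
    exact Multiset.toFinset_sum_count_eq _
  calc (∑ z ∈ S, sVal p f (z : ℤ)) ≤ _ := step1
    _ = _ := step2
    _ ≤ _ := step3
    _ = Multiset.card F.roots := step4
    _ ≤ F.natDegree := F.card_roots'
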